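/- arXiv:0909.2467 — 5 statements merged into one kernel-verified Lean document; each statement's English description precedes it below -/
import Mathlib

section
/- If G is a simple graph on n vertices with more than (1 - 1/(k-1)) · n²/2 edges, then G contains a complete subgraph on k vertices. -/
open Finset SimpleGraph

lemma turan_edge_bound (n r : ℕ) (hr : 0 < r) :
    (((turanGraph n r).edgeFinset.card : ℝ)) ≤ (1 - 1/(r:ℝ)) * (n:ℝ)^2 / 2 := by
  classical
  have hhs := SimpleGraph.sum_degrees_eq_twice_card_edges (turanGraph n r)
  set c : ℕ → ℕ := fun i => #(univ.filter (fun w : Fin n => (w:ℕ) % r = i)) with hc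
  have hdeg : ∀ v : Fin n, (turanGraph n r).degree v = n - c ((v:ℕ) % r) := by
    intro v
    rw [← card_neighborFinset_eq_degree]
    have : (turanGraph n r).neighborFinset v
        = univ \ (univ.filter fun w : Fin n => (w:ℕ) % r = (v:ℕ) % r) := by
      ext w
      rw [mem_neighborFinset]
      simp [turanGraph, mem_neighborFinset, SimpleGraph.adj_comm, eq_comm, ne_comm]
    rw [this, card_sdiff_of_subset (filter_subset _ _), card_univ, Fintype.card_fin]
  have hcle : ∀ i, c i ≤ n := fun i => by
    simpa using (card_filter_le (univ : Finset (Fin n)) _).trans_eq (by simp)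
  have hmaps : ∀ v : Fin n, (v:ℕ) % r ∈ range r := fun v => mem_range.2 (Nat.mod_lt _ hr)
  -- sum of fibers is n
  have hsum1 : ∑ i ∈ range r, c i = n := by
    have := Finset.sum_fiberwise_of_maps_to (s := (univ : Finset (Fin n)))
      (fun v _ => hmaps v) (fun _ => (1:ℕ))
    simpa [hc] using this
  -- sum over vertices of fiber size equals sum of squares
  have hsum2 : ∑ v : Fin n, c ((v:ℕ) % r) = ∑ i ∈ range r, (c i)^2 := by
    rw [← Finset.sum_fiberwise_of_maps_to (fun v (_ : v ∈ univ) => hmaps v)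
      (fun v => c ((v:ℕ) % r))]
    refine Finset.sum_congr rfl fun i _ => ?_
    rw [Finset.sum_congr rfl (fun v hv => by rw [(mem_filter.1 hv).2]),
      Finset.sum_const, smul_eq_mul, sq]
  -- degree sum
  have hdegsum : ∑ v : Fin n, (turanGraph n r).degree v = n^2 - ∑ i ∈ range r, (c i)^2 := by
    rw [Finset.sum_congr rfl (fun v _ => hdeg v), ← hsum2]
    rw [Finset.sum_tsub_distrib univ (fun v _ => hcle _)]
    simp [sq]
  have hc2n : ∑ i ∈ range r, (c i)^2 ≤ n^2 := by
    rw [← hsum2]; calc ∑ v : Fin n, c ((v:ℕ) % r) ≤ ∑ v : Fin n, n :=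
        Finset.sum_le_sum fun v _ => hcle _
      _ = n^2 := by simp [sq]
  -- Cauchy-Schwarz: n^2 ≤ r * Σ cᵢ²
  have hcs : (n:ℝ)^2 ≤ (r:ℝ) * ∑ i ∈ range r, ((c i : ℝ))^2 := by
    have := sq_sum_le_card_mul_sum_sq (s := range r) (f := fun i => ((c i : ℝ)))
    simpa [hsum1, ← Nat.cast_sum] using this
  -- combine
  have h2E : 2 * ((turanGraph n r).edgeFinset.card : ℝ)
      = (n:ℝ)^2 - ∑ i ∈ range r, ((c i : ℝ))^2 := by
    have := congrArg (Nat.cast : ℕ → ℝ) (hhs.symm.trans hdegsum)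
    push_cast [Nat.cast_sub hc2n] at this
    linarith [this]
  have hr' : (0:ℝ) < r := by positivity
  have key : (n:ℝ)^2 / r ≤ ∑ i ∈ range r, ((c i : ℝ))^2 := by
    rw [div_le_iff₀ hr']; linarith [hcs]
  have expand : (1 - 1/(r:ℝ)) * (n:ℝ)^2 / 2 = ((n:ℝ)^2 - (n:ℝ)^2 / r)/2 := by ring
  linarith


/-- Turán's theorem: if a simple graph on `n` vertices has more than
`(1 - 1/(k-1)) * n^2 / 2` edges, then it contains a complete subgraph on `k` vertices. -/
theorem stmt_0 {V : Type*} [Fintype V] [DecidableEq V] (G : SimpleGraph V)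
    [DecidableRel G.Adj] (n k : ℕ) (hn : Fintype.card V = n) (hk : 2 ≤ k)
    (h : ((1 : ℝ) - 1 / ((k : ℝ) - 1)) * (n : ℝ) ^ 2 / 2 < (G.edgeFinset.card : ℝ)) :
    ∃ s : Finset V, G.IsNClique k s := by
  classical
  by_contra hcon
  push_neg at hcon
  have hcf : G.CliqueFree k := fun s hs => hcon s hs
  obtain ⟨r, rfl⟩ : ∃ r, k = r + 1 := ⟨k - 1, by omega⟩
  have hr : 0 < r := by omega
  let e : V ≃ Fin n := Fintype.equivFinOfCardEq hn
  let H : SimpleGraph (Fin n) := G.comap ⇑e.symm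
  have : DecidableRel H.Adj := fun a b => ‹DecidableRel G.Adj› _ _
  let φ : H ≃g G := SimpleGraph.Iso.comap e.symm G
  have hHcf : H.CliqueFree (r + 1) := hcf.comap φ.toEmbedding.isContained
  have hcard : #H.edgeFinset = #G.edgeFinset := by
    rw [SimpleGraph.edgeFinset_card, SimpleGraph.edgeFinset_card]
    exact Fintype.card_congr φ.mapEdgeSet
  have hle : #H.edgeFinset ≤ #(SimpleGraph.turanGraph n r).edgeFinset :=
    (SimpleGraph.isTuranMaximal_turanGraph hr).2 hHcf
  have hb := turan_edge_bound n r hr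
  have hcast : ((r + 1 : ℕ) : ℝ) - 1 = (r : ℝ) := by push_cast; ring
  rw [hcast] at h
  have : (#G.edgeFinset : ℝ) ≤ (1 - 1/(r:ℝ)) * (n:ℝ)^2 / 2 := by
    rw [← hcard]
    exact le_trans (by exact_mod_cast hle) hb
  linarith
end

section
/- If a simple graph G on n vertices contains no independent set of size k+1 (k ≥ 1), then the number of non-edges of G is at most (1 - 1/k) · n²/2. -/
open Finset

lemma turan_ordered {V : Type*} [Fintype V] [DecidableEq V] (G : SimpleGraph V)
    [DecidableRel G.Adj] (k : ℕ) (hk : 1 ≤ k) (hcf : G.CliqueFree (k + 1)) :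
    ∀ A : Finset V,
      ((((A ×ˢ A).filter fun p => G.Adj p.1 p.2).card : ℝ)) ≤ (1 - 1 / k) * (A.card : ℝ) ^ 2 := by
  intro A
  induction A using Finset.strongInduction with
  | _ A ih =>
  rcases A.eq_empty_or_nonempty with rfl | hA
  · simp
  -- pick a maximum-cardinality clique S ⊆ A
  have hcand : (A.powerset.filter fun S : Finset V => G.IsClique (S : Set V) ∧ S.Nonempty).Nonempty := by
    obtain ⟨a, ha⟩ := hA
    exact ⟨{a}, by simp [ha]⟩
  obtain ⟨S, hSmem, hSmax⟩ := Finset.exists_max_image _ (fun S : Finset V => S.card) hcand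
  simp only [mem_filter, mem_powerset] at hSmem
  obtain ⟨hSA, hSclique, hSne⟩ := hSmem
  have hScard : S.card ≤ k := by
    by_contra hlt
    push_neg at hlt
    obtain ⟨T, hTS, hTcard⟩ := S.exists_subset_card_eq hlt
    exact hcf T ⟨hSclique.subset (by exact_mod_cast hTS), hTcard⟩
  -- every v in A \ S has at most |S| - 1 neighbors in S
  have hdeg : ∀ v ∈ A \ S, ((S.filter fun u => G.Adj v u).card) ≤ S.card - 1 := by
    intro v hv
    rw [mem_sdiff] at hv
    by_contra hgt
    push_neg at hgt
    have hall : S.filter (fun u => G.Adj v u) = S := by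
      apply Finset.eq_of_subset_of_card_le (filter_subset _ _)
      omega
    have hadj : ∀ u ∈ S, G.Adj v u := by
      intro u hu
      have := hall ▸ hu
      exact (mem_filter.mp (hall.symm ▸ hu)).2
    have hclq : G.IsClique (insert v S : Finset V) := by
      rw [coe_insert]
      exact hSclique.insert fun u hu _ => hadj u hu
    have := hSmax (insert v S) (by
      simp only [mem_filter, mem_powerset]
      exact ⟨insert_subset hv.1 hSA, hclq, insert_nonempty _ _⟩)
    rw [card_insert_of_notMem hv.2] at this
    omega
  -- split the counting over S and B := A \ S
  set B := A \ S with hB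
  have hBA : B ⊂ A := by
    obtain ⟨a, ha⟩ := hSne
    exact (Finset.ssubset_iff_of_subset sdiff_subset).mpr ⟨a, hSA ha, by simp [hB, ha]⟩
  have hdisj : Disjoint S B := disjoint_sdiff
  have hAU : A = S ∪ B := by
    rw [hB, Finset.union_sdiff_of_subset hSA]
  have hcount : ∀ X Y : Finset V,
      ((X ×ˢ Y).filter fun p => G.Adj p.1 p.2).card
        = ∑ x ∈ X, (Y.filter fun y => G.Adj x y).card := by
    intro X Y
    rw [Finset.card_filter, Finset.sum_product]
    congr 1
    ext x
    rw [Finset.card_filter]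
  have hsum : ∀ x : V, ∀ X Y : Finset V, Disjoint X Y →
      ((X ∪ Y).filter fun y => G.Adj x y).card
        = (X.filter fun y => G.Adj x y).card + (Y.filter fun y => G.Adj x y).card := by
    intro x X Y hXY
    rw [Finset.filter_union, Finset.card_union_of_disjoint
      (Finset.disjoint_filter_filter hXY)]
  have hsplit : ((A ×ˢ A).filter fun p => G.Adj p.1 p.2).card
      = ∑ u ∈ S, (S.filter fun y => G.Adj u y).card
      + ∑ u ∈ S, (B.filter fun y => G.Adj u y).card
      + ∑ v ∈ B, (S.filter fun y => G.Adj v y).card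
      + ∑ v ∈ B, (B.filter fun y => G.Adj v y).card := by
    rw [hcount, hAU, Finset.sum_union hdisj]
    simp only [hsum _ _ _ hdisj]
    rw [Finset.sum_add_distrib, Finset.sum_add_distrib]
    ring
  have ht1 : ∑ u ∈ S, (S.filter fun y => G.Adj u y).card ≤ S.card * (S.card - 1) := by
    calc ∑ u ∈ S, (S.filter fun y => G.Adj u y).card
        ≤ ∑ u ∈ S, (S.card - 1) := by
          refine Finset.sum_le_sum fun u hu => ?_
          have : S.filter (fun y => G.Adj u y) ⊆ S.erase u := by
            intro y hy
            rw [Finset.mem_filter] at hy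
            exact Finset.mem_erase.mpr ⟨hy.2.ne', hy.1⟩
          calc (S.filter fun y => G.Adj u y).card ≤ (S.erase u).card := Finset.card_le_card this
            _ = S.card - 1 := Finset.card_erase_of_mem hu
      _ = S.card * (S.card - 1) := by rw [Finset.sum_const, smul_eq_mul]
  have ht3 : ∑ v ∈ B, (S.filter fun y => G.Adj v y).card ≤ B.card * (S.card - 1) := by
    calc ∑ v ∈ B, (S.filter fun y => G.Adj v y).card
        ≤ ∑ v ∈ B, (S.card - 1) := Finset.sum_le_sum fun v hv => hdeg v hv
      _ = B.card * (S.card - 1) := by rw [Finset.sum_const, smul_eq_mul]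
  have ht2 : ∑ u ∈ S, (B.filter fun y => G.Adj u y).card
      = ∑ v ∈ B, (S.filter fun y => G.Adj v y).card := by
    simp only [Finset.card_filter]
    rw [Finset.sum_comm]
    congr 1
    ext v
    congr 1
    ext u
    simp [SimpleGraph.adj_comm]
  have hBB := ih B hBA
  -- put together, in ℝ
  have hkR : (0:ℝ) < (k : ℝ) := by exact_mod_cast hk
  set s : ℕ := S.card with hs
  set b : ℕ := B.card with hb
  have hs1 : 1 ≤ s := Finset.card_pos.mpr hSne
  have hcardA : A.card = s + b := by
    rw [hAU, Finset.card_union_of_disjoint hdisj]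
  have hsk : (s : ℝ) ≤ (k : ℝ) := by exact_mod_cast hScard
  have hs1R : (1:ℝ) ≤ (s : ℝ) := by exact_mod_cast hs1
  have hnat : ((A ×ˢ A).filter fun p => G.Adj p.1 p.2).card
      ≤ s * (s - 1) + 2 * (b * (s - 1))
        + ((B ×ˢ B).filter fun p => G.Adj p.1 p.2).card := by
    rw [hsplit, hcount]
    omega
  have hnatR : (((A ×ˢ A).filter fun p => G.Adj p.1 p.2).card : ℝ)
      ≤ (s:ℝ) * ((s:ℝ) - 1) + 2 * ((b:ℝ) * ((s:ℝ) - 1))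
        + (((B ×ˢ B).filter fun p => G.Adj p.1 p.2).card : ℝ) := by
    have := (Nat.cast_le (α := ℝ)).mpr hnat
    push_cast [Nat.cast_sub hs1] at this
    convert this using 2 <;> push_cast [Nat.cast_sub hs1] <;> ring
  have hrw : ((1:ℝ) - 1 / k) = ((k:ℝ) - 1) / k := by
    field_simp
  rw [hrw] at hBB ⊢
  rw [hcardA]
  push_cast
  rw [div_mul_eq_mul_div, le_div_iff₀ hkR]
  rw [div_mul_eq_mul_div, le_div_iff₀ hkR] at hBB
  have hkey : ((k:ℝ) - (s:ℝ)) * ((s:ℝ) + 2 * (b:ℝ)) ≥ 0 := by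
    have hb0 : (0:ℝ) ≤ (b:ℝ) := Nat.cast_nonneg b
    nlinarith
  nlinarith [hBB, hnatR, hkey, hkR]

/-- Dual Turán: if a simple graph on `n` vertices has no independent set of size `k+1`
(`k ≥ 1`), then its number of non-edges is at most `(1 - 1/k) * n^2 / 2`. -/
theorem stmt_1 {V : Type*} [Fintype V] [DecidableEq V] (G : SimpleGraph V)
    [DecidableRel G.Adj] (n k : ℕ) (hn : Fintype.card V = n) (hk : 1 ≤ k)
    (h : ∀ s : Finset V, ¬ (Gᶜ).IsNClique (k + 1) s) :
    ((Gᶜ).edgeFinset.card : ℝ) ≤ ((1 : ℝ) - 1 / (k : ℝ)) * (n : ℝ) ^ 2 / 2 := by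
  have hcf : (Gᶜ).CliqueFree (k + 1) := h
  have key := turan_ordered (Gᶜ) k hk hcf Finset.univ
  have h2 : 2 * (Gᶜ).edgeFinset.card
      = ((Finset.univ ×ˢ Finset.univ).filter fun p : V × V => (Gᶜ).Adj p.1 p.2).card := by
    rw [SimpleGraph.two_mul_card_edgeFinset, Finset.univ_product_univ]
  have hcard : (Finset.univ : Finset V).card = n := hn ▸ rfl
  rw [hcard] at key
  have h2R : 2 * ((Gᶜ).edgeFinset.card : ℝ)
      = (((Finset.univ ×ˢ Finset.univ).filter fun p : V × V => (Gᶜ).Adj p.1 p.2).card : ℝ) := by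
    exact_mod_cast congrArg (Nat.cast : ℕ → ℝ) h2
  linarith
end

section
/- In the theory of the triangle-free random graph (the generic triangle-free graph), there exist three pairwise disjoint countably infinite sets X, Y, Z of vertices such that each of the pairs (X,Y), (Y,Z), (X,Z) is a bipartite random graph, i.e., for any finite disjoint η, ν contained in one side, the other side contains a vertex adjacent to every element of η and to no element of ν. -/
/-- `X` is independent over `Y`: every finite adjacency/non-adjacency pattern over `Y`
is realized by some element of `X`. -/
def IndepOver {V : Type*} (G : SimpleGraph V) (X Y : Set V) : Prop :=
  ∀ η ν : Finset V, (↑η : Set V) ⊆ Y → (↑ν : Set V) ⊆ Y → Disjoint η ν →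
    ∃ x ∈ X, (∀ b ∈ η, G.Adj x b) ∧ (∀ b ∈ ν, ¬ G.Adj x b)

/-- `(X,Y)` is a bipartite random graph: each side is independent over the other. -/
def BipRandom {V : Type*} (G : SimpleGraph V) (X Y : Set V) : Prop :=
  IndepOver G X Y ∧ IndepOver G Y X

namespace Stmt12

attribute [local instance] Classical.propDecidable

variable {V : Type*} [DecidableEq V] {G : SimpleGraph V}

/-- The extension axiom. -/
def Hext (G : SimpleGraph V) : Prop :=
  ∀ A B : Finset V, Disjoint A B →
      (∀ a ∈ A, ∀ a' ∈ A, a ≠ a' → ¬ G.Adj a a') →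
      ∃ v, v ∉ A ∧ v ∉ B ∧ (∀ a ∈ A, G.Adj v a) ∧ (∀ b ∈ B, ¬ G.Adj v b)

noncomputable def pick (hext : Hext G) (A B : Finset V) : V :=
  if h : Disjoint A B ∧ (∀ a ∈ A, ∀ a' ∈ A, a ≠ a' → ¬ G.Adj a a') then
    (hext A B h.1 h.2).choose
  else (hext ∅ ∅ (by simp) (by simp)).choose

lemma pick_spec (hext : Hext G) {A B : Finset V} (h1 : Disjoint A B)
    (h2 : ∀ a ∈ A, ∀ a' ∈ A, a ≠ a' → ¬ G.Adj a a') :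
    pick hext A B ∉ A ∧ pick hext A B ∉ B ∧ (∀ a ∈ A, G.Adj (pick hext A B) a) ∧
      (∀ b ∈ B, ¬ G.Adj (pick hext A B) b) := by
  rw [pick, dif_pos ⟨h1, h2⟩]
  exact (hext A B h1 h2).choose_spec

abbrev Req (V : Type*) := (Fin 3 × Fin 3) × Finset V × Finset V

noncomputable def step (hext : Hext G) (r : Req V) (s : Fin 3 → Finset V) :
    Fin 3 → Finset V :=
  if r.1.1 ≠ r.1.2 ∧ r.2.1 ⊆ s r.1.2 ∧ r.2.2 ⊆ s r.1.2 ∧ Disjoint r.2.1 r.2.2 then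
    Function.update s r.1.1
      (insert (pick hext r.2.1 ((s 0 ∪ s 1 ∪ s 2) \ r.2.1)) (s r.1.1))
  else s

noncomputable def S (hext : Hext G) (g : ℕ → Req V) : ℕ → Fin 3 → Finset V
  | 0 => fun _ => ∅
  | n + 1 => step hext (g n) (S hext g n)

lemma subset_U (s : Fin 3 → Finset V) (j : Fin 3) : s j ⊆ s 0 ∪ s 1 ∪ s 2 := by
  fin_cases j
  · exact (Finset.subset_union_left).trans Finset.subset_union_left
  · exact (Finset.subset_union_right).trans Finset.subset_union_left
  · exact Finset.subset_union_right

def Good (G : SimpleGraph V) (s : Fin 3 → Finset V) : Prop :=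
  (∀ j, ∀ a ∈ s j, ∀ b ∈ s j, a ≠ b → ¬ G.Adj a b) ∧
  (∀ j k, j ≠ k → Disjoint (s j) (s k))

lemma good_step (hext : Hext G) (r : Req V) {s : Fin 3 → Finset V}
    (hs : Good G s) : Good G (step hext r s) := by
  rw [step]
  split
  · rename_i h
    obtain ⟨hat, hη, hν, hd⟩ := h
    set a := r.1.1
    set t := r.1.2
    set η := r.2.1
    set B := (s 0 ∪ s 1 ∪ s 2) \ η with hB
    have hdisj : Disjoint η B := Finset.sdiff_disjoint.symm
    have hind : ∀ x ∈ η, ∀ y ∈ η, x ≠ y → ¬ G.Adj x y :=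
      fun x hx y hy hxy => hs.1 t x (hη hx) y (hη hy) hxy
    obtain ⟨hvη, hvB, hadj, hnadj⟩ := pick_spec hext hdisj hind
    set v := pick hext η B
    have hvU : ∀ j, v ∉ s j := by
      intro j hj
      by_cases hm : v ∈ η
      · exact hvη hm
      · exact hvB (Finset.mem_sdiff.mpr ⟨subset_U s j hj, hm⟩)
    have hnadjU : ∀ j, ∀ x ∈ s j, x ∉ η → ¬ G.Adj v x := fun j x hx hxη =>
      hnadj x (Finset.mem_sdiff.mpr ⟨subset_U s j hx, hxη⟩)
    have hmemη : ∀ x ∈ s a, x ∉ η := fun x hx hxη =>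
      Finset.disjoint_left.mp (hs.2 a t hat) hx (hη hxη)
    constructor
    · intro j x hx y hy hxy
      by_cases hja : j = a
      · subst hja
        rw [Function.update_self] at hx hy
        rcases Finset.mem_insert.mp hx with hx | hx
        · rcases Finset.mem_insert.mp hy with hy | hy
          · exact absurd (hx.trans hy.symm) hxy
          · subst hx; exact hnadjU a y hy (hmemη y hy)
        · rcases Finset.mem_insert.mp hy with hy | hy
          · subst hy; exact fun hadj' => hnadjU a x hx (hmemη x hx) hadj'.symm
          · exact hs.1 a x hx y hy hxy
      · rw [Function.update_of_ne hja] at hx hy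
        exact hs.1 j x hx y hy hxy
    · intro j k hjk
      by_cases hja : j = a
      · subst hja
        rw [Function.update_self, Function.update_of_ne (Ne.symm hjk)]
        exact Finset.disjoint_insert_left.mpr ⟨hvU k, hs.2 a k hjk⟩
      · rw [Function.update_of_ne hja]
        by_cases hka : k = a
        · subst hka
          rw [Function.update_self]
          exact Finset.disjoint_insert_right.mpr ⟨hvU j, hs.2 j a hjk⟩
        · rw [Function.update_of_ne hka]
          exact hs.2 j k hjk
  · exact hs

lemma good_S (hext : Hext G) (g : ℕ → Req V) : ∀ n, Good G (S hext g n)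
  | 0 => ⟨fun j a ha => by simp [S] at ha, fun j k _ => by simp [S]⟩
  | n + 1 => good_step hext (g n) (good_S hext g n)

lemma subset_step (hext : Hext G) (r : Req V) (s : Fin 3 → Finset V) (j : Fin 3) :
    s j ⊆ step hext r s j := by
  rw [step]
  split
  · by_cases hja : j = r.1.1
    · subst hja; rw [Function.update_self]; exact Finset.subset_insert _ _
    · rw [Function.update_of_ne hja]
  · rfl

lemma S_mono (hext : Hext G) (g : ℕ → Req V) (j : Fin 3) :
    Monotone (fun n => S hext g n j) := by
  apply monotone_nat_of_le_succ
  intro n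
  exact subset_step hext (g n) (S hext g n) j

lemma finset_subset_iUnion {f : ℕ → Finset V} (hf : Monotone f) {s : Finset V}
    (h : (↑s : Set V) ⊆ ⋃ n, ↑(f n)) : ∃ m, s ⊆ f m := by
  classical
  refine ⟨s.sup (fun x => if hx : ∃ n, x ∈ f n then hx.choose else 0), ?_⟩
  intro x hx
  have hx' : ∃ n, x ∈ f n := by
    obtain ⟨_, ⟨n, rfl⟩, hn⟩ := h hx
    exact ⟨n, hn⟩
  have := hx'.choose_spec
  have hle : (if hx : ∃ n, x ∈ f n then hx.choose else 0) ≤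
      s.sup (fun x => if hx : ∃ n, x ∈ f n then hx.choose else 0) :=
    Finset.le_sup (f := fun x => if hx : ∃ n, x ∈ f n then hx.choose else 0) hx
  rw [dif_pos hx'] at hle
  exact hf hle this

/-- The key realization lemma. -/
lemma realize (hext : Hext G) (g : ℕ → Req V)
    (hg : ∀ r : Req V, ∀ m : ℕ, ∃ n, m ≤ n ∧ g n = r)
    (a t : Fin 3) (hat : a ≠ t) :
    IndepOver G (⋃ n, ↑(S hext g n a)) (⋃ n, ↑(S hext g n t)) := by
  intro η ν hη hν hd
  obtain ⟨m1, hm1⟩ := finset_subset_iUnion (S_mono hext g t) hη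
  obtain ⟨m2, hm2⟩ := finset_subset_iUnion (S_mono hext g t) hν
  obtain ⟨n, hn, hgn⟩ := hg ((a, t), η, ν) (max m1 m2)
  have hηn : η ⊆ S hext g n t := hm1.trans (S_mono hext g t ((le_max_left _ _).trans hn))
  have hνn : ν ⊆ S hext g n t := hm2.trans (S_mono hext g t ((le_max_right _ _).trans hn))
  set s := S hext g n with hs
  set B := (s 0 ∪ s 1 ∪ s 2) \ η with hB
  have hdisj : Disjoint η B := Finset.sdiff_disjoint.symm
  have hind : ∀ x ∈ η, ∀ y ∈ η, x ≠ y → ¬ G.Adj x y :=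
    fun x hx y hy hxy => (good_S hext g n).1 t x (hηn hx) y (hηn hy) hxy
  obtain ⟨hvη, hvB, hadj, hnadj⟩ := pick_spec hext hdisj hind
  set v := pick hext η B with hv
  have hguard : (((a, t), η, ν) : Req V).1.1 ≠ (((a, t), η, ν) : Req V).1.2 ∧
      (((a, t), η, ν) : Req V).2.1 ⊆ s (((a, t), η, ν) : Req V).1.2 ∧
      (((a, t), η, ν) : Req V).2.2 ⊆ s (((a, t), η, ν) : Req V).1.2 ∧
      Disjoint (((a, t), η, ν) : Req V).2.1 (((a, t), η, ν) : Req V).2.2 :=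
    ⟨hat, hηn, hνn, hd⟩
  have hstep : S hext g (n + 1) a = insert v (s a) := by
    show step hext (g n) s a = _
    rw [hgn, step, if_pos hguard]
    simp [Function.update_self, hv, hB]
  refine ⟨v, ?_, hadj, ?_⟩
  · exact Set.mem_iUnion.mpr ⟨n + 1, by rw [hstep]; exact Finset.mem_insert_self _ _⟩
  · intro b hb
    apply hnadj
    rw [hB, Finset.mem_sdiff]
    exact ⟨subset_U s t (hνn hb), fun hbη => Finset.disjoint_left.mp hd hbη hb⟩

lemma card_unbounded (hext : Hext G) (g : ℕ → Req V)
    (hg : ∀ r : Req V, ∀ m : ℕ, ∃ n, m ≤ n ∧ g n = r)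
    (a t : Fin 3) (hat : a ≠ t) : ∀ k : ℕ, ∃ n, k ≤ (S hext g n a).card := by
  intro k
  induction k with
  | zero => exact ⟨0, Nat.zero_le _⟩
  | succ k ih =>
    obtain ⟨n, hn⟩ := ih
    obtain ⟨n', hn', hgn'⟩ := hg ((a, t), (∅ : Finset V), (∅ : Finset V)) n
    set s := S hext g n' with hs
    set B := (s 0 ∪ s 1 ∪ s 2) \ (∅ : Finset V) with hB
    have hdisj : Disjoint (∅ : Finset V) B := Finset.disjoint_empty_left _
    have hind : ∀ x ∈ (∅ : Finset V), ∀ y ∈ (∅ : Finset V), x ≠ y → ¬ G.Adj x y := by simp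
    obtain ⟨hvη, hvB, hadj, hnadj⟩ := pick_spec hext hdisj hind
    set v := pick hext (∅ : Finset V) B with hv
    have hguard : (((a, t), (∅:Finset V), (∅:Finset V)) : Req V).1.1 ≠
        (((a, t), (∅:Finset V), (∅:Finset V)) : Req V).1.2 ∧
        (((a, t), (∅:Finset V), (∅:Finset V)) : Req V).2.1 ⊆
          s (((a, t), (∅:Finset V), (∅:Finset V)) : Req V).1.2 ∧
        (((a, t), (∅:Finset V), (∅:Finset V)) : Req V).2.2 ⊆
          s (((a, t), (∅:Finset V), (∅:Finset V)) : Req V).1.2 ∧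
        Disjoint (((a, t), (∅:Finset V), (∅:Finset V)) : Req V).2.1
          (((a, t), (∅:Finset V), (∅:Finset V)) : Req V).2.2 :=
    ⟨hat, Finset.empty_subset _, Finset.empty_subset _, Finset.disjoint_empty_left _⟩
    have hstep : S hext g (n' + 1) a = insert v (s a) := by
      show step hext (g n') s a = _
      rw [hgn', step, if_pos hguard]
      simp [Function.update_self, hv, hB]
    have hvs : v ∉ s a := by
      intro hvsa
      apply hvB
      rw [hB, Finset.mem_sdiff]
      exact ⟨subset_U s a hvsa, Finset.notMem_empty v⟩
    refine ⟨n' + 1, ?_⟩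
    rw [hstep, Finset.card_insert_of_notMem hvs]
    have : (S hext g n a).card ≤ (s a).card :=
      Finset.card_le_card (S_mono hext g a hn')
    omega

lemma infinite_union (hext : Hext G) (g : ℕ → Req V)
    (hg : ∀ r : Req V, ∀ m : ℕ, ∃ n, m ≤ n ∧ g n = r)
    (a t : Fin 3) (hat : a ≠ t) : (⋃ n, ↑(S hext g n a) : Set V).Infinite := by
  intro hfin
  obtain ⟨n, hn⟩ := card_unbounded hext g hg a t hat (hfin.toFinset.card + 1)
  have hsub : S hext g n a ⊆ hfin.toFinset := by
    intro x hx
    rw [Set.Finite.mem_toFinset]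
    exact Set.mem_iUnion.mpr ⟨n, hx⟩
  have := Finset.card_le_card hsub
  omega

lemma disjoint_union (hext : Hext G) (g : ℕ → Req V) (a t : Fin 3) (hat : a ≠ t) :
    Disjoint (⋃ n, ↑(S hext g n a) : Set V) (⋃ n, ↑(S hext g n t) : Set V) := by
  rw [Set.disjoint_left]
  rintro x hx hx'
  obtain ⟨n, hn⟩ := Set.mem_iUnion.mp hx
  obtain ⟨m, hm⟩ := Set.mem_iUnion.mp hx'
  have h1 : x ∈ S hext g (max n m) a := S_mono hext g a (le_max_left n m) hn
  have h2 : x ∈ S hext g (max n m) t := S_mono hext g t (le_max_right n m) hm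
  exact Finset.disjoint_left.mp ((good_S hext g (max n m)).2 a t hat) h1 h2



theorem stmt_12' {V : Type*} [Countable V] (G : SimpleGraph V)
    (htf : G.CliqueFree 3)
    (hext : ∀ A B : Finset V, Disjoint A B →
      (∀ a ∈ A, ∀ a' ∈ A, a ≠ a' → ¬ G.Adj a a') →
      (∃ v, v ∉ A ∧ v ∉ B ∧ (∀ a ∈ A, G.Adj v a) ∧ (∀ b ∈ B, ¬ G.Adj v b))) :
    ∃ X Y Z : Set V, X.Infinite ∧ Y.Infinite ∧ Z.Infinite ∧
      Disjoint X Y ∧ Disjoint Y Z ∧ Disjoint X Z ∧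
      (IndepOver G X Y ∧ IndepOver G Y X) ∧
      (IndepOver G Y Z ∧ IndepOver G Z Y) ∧
      (IndepOver G X Z ∧ IndepOver G Z X) := by
  classical
  have hext' : Hext G := hext
  obtain ⟨g₀, hg₀⟩ := exists_surjective_nat (Req V × ℕ)
  set g : ℕ → Req V := fun n => (g₀ n).1 with hgdef
  have hg : ∀ r : Req V, ∀ m : ℕ, ∃ n, m ≤ n ∧ g n = r := by
    intro r m
    have hinf : {n : ℕ | g n = r}.Infinite := by
      apply Set.infinite_of_injective_forall_mem
        (f := fun k : ℕ => (hg₀ (r, k)).choose)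
      case hi =>
        intro k1 k2 hk
        have h1 := (hg₀ (r, k1)).choose_spec
        have h2 := (hg₀ (r, k2)).choose_spec
        simp only at hk
        rw [hk, h2] at h1
        exact ((Prod.ext_iff.mp h1).2).symm
      case hf =>
        intro k
        have h1 := (hg₀ (r, k)).choose_spec
        simp only [Set.mem_setOf_eq, hgdef, h1]
    obtain ⟨n, hn, hmn⟩ := hinf.exists_gt m
    exact ⟨n, le_of_lt hmn, hn⟩
  refine ⟨⋃ n, ↑(S hext' g n 0), ⋃ n, ↑(S hext' g n 1), ⋃ n, ↑(S hext' g n 2),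
    infinite_union hext' g hg 0 1 (by decide),
    infinite_union hext' g hg 1 0 (by decide),
    infinite_union hext' g hg 2 0 (by decide),
    disjoint_union hext' g 0 1 (by decide),
    disjoint_union hext' g 1 2 (by decide),
    disjoint_union hext' g 0 2 (by decide),
    ⟨realize hext' g hg 0 1 (by decide), realize hext' g hg 1 0 (by decide)⟩,
    ⟨realize hext' g hg 1 2 (by decide), realize hext' g hg 2 1 (by decide)⟩,
    ⟨realize hext' g hg 0 2 (by decide), realize hext' g hg 2 0 (by decide)⟩⟩

end Stmt12


/-- In the triangle-free random graph there are pairwise disjoint countably infinite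
sets `X, Y, Z` such that each of `(X,Y)`, `(Y,Z)`, `(X,Z)` is a bipartite random graph. -/
theorem stmt_12 {V : Type*} [Countable V] (G : SimpleGraph V)
    (htf : G.CliqueFree 3)
    (hext : ∀ A B : Finset V, Disjoint A B →
      (∀ a ∈ A, ∀ a' ∈ A, a ≠ a' → ¬ G.Adj a a') →
      ∃ v, v ∉ A ∧ v ∉ B ∧ (∀ a ∈ A, G.Adj v a) ∧ (∀ b ∈ B, ¬ G.Adj v b)) :
    ∃ X Y Z : Set V, X.Infinite ∧ Y.Infinite ∧ Z.Infinite ∧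
      Disjoint X Y ∧ Disjoint Y Z ∧ Disjoint X Z ∧
      BipRandom G X Y ∧ BipRandom G Y Z ∧ BipRandom G X Z := by
  exact Stmt12.stmt_12' G htf hext
end

section
/- Triangle counting lemma: let X, Y, Z be disjoint finite vertex sets in a graph such that each pair (X,Y), (Y,Z), (X,Z) is ε-regular with density at least δ, where δ ≥ 2ε > 0. Then the number of triangles (x,y,z) ∈ X × Y × Z with x,y,z pairwise adjacent is at least (1 - 2ε)(δ - ε)³ |X| |Y| |Z|. -/
/-- Number of edges between `A` and `B`. -/
def crossEdges {V : Type*} [DecidableEq V] (G : SimpleGraph V) [DecidableRel G.Adj]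
    (A B : Finset V) : ℕ :=
  ((A ×ˢ B).filter fun p => G.Adj p.1 p.2).card

/-- Edge density between `A` and `B`. -/
noncomputable def den {V : Type*} [DecidableEq V] (G : SimpleGraph V) [DecidableRel G.Adj]
    (A B : Finset V) : ℝ :=
  (crossEdges G A B : ℝ) / ((A.card : ℝ) * (B.card : ℝ))

/-- `(A,B)` is an `ε`-regular pair. -/
def IsReg {V : Type*} [DecidableEq V] (G : SimpleGraph V) [DecidableRel G.Adj]
    (ε : ℝ) (A B : Finset V) : Prop :=
  ∀ A' ⊆ A, ∀ B' ⊆ B, ε * A.card ≤ (A'.card : ℝ) → ε * B.card ≤ (B'.card : ℝ) →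
    |den G A' B' - den G A B| < ε

open Finset

section TCaux

variable {α : Type*} [DecidableEq α] (G : SimpleGraph α) [DecidableRel G.Adj] {ε δ : ℝ}
  {s t u : Finset α}

lemma crossEdges_eq_sum (s t : Finset α) :
    crossEdges G s t = ∑ x ∈ s, #{y ∈ t | G.Adj x y} := by
  show #(Rel.interedges G.Adj s t) = _
  rw [Rel.interedges_eq_biUnion, card_biUnion]
  · simp
  · rintro x hx y hy hxy
    simp only [disjoint_left, mem_map, Function.Embedding.coeFn_mk]
    rintro ⟨p, q⟩ ⟨b, hb, hb'⟩ ⟨c, hc, hc'⟩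
    obtain ⟨rfl, rfl⟩ := Prod.mk.inj hb'
    exact hxy (Prod.mk.inj hc').1.symm

lemma crossEdges_le_mul (s t : Finset α) : (crossEdges G s t : ℝ) ≤ (#s : ℝ) * #t := by
  have := card_filter_le (s ×ˢ t) fun p => G.Adj p.1 p.2
  rw [card_product] at this
  exact_mod_cast this

lemma den_le_one (s t : Finset α) : den G s t ≤ 1 := by
  rw [den]
  rcases eq_or_ne ((#s : ℝ) * #t) 0 with h | h
  · simp [h]
  · rw [div_le_one (lt_of_le_of_ne (by positivity) (Ne.symm h))]
    exact crossEdges_le_mul G s t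

/-- Vertices of `s` with too few neighbours in `t`. -/
noncomputable def badV (G : SimpleGraph α) [DecidableRel G.Adj] (ε : ℝ) (s t : Finset α) :
    Finset α :=
  {x ∈ s | (#{y ∈ t | G.Adj x y} : ℝ) < (den G s t - ε) * #t}

lemma card_badV_le (hε : 0 < ε) (hε1 : ε ≤ 1) (ht : (0:ℝ) < #t) (hd : 2 * ε ≤ den G s t)
    (hr : IsReg G ε s t) : (#(badV G ε s t) : ℝ) ≤ ε * #s := by
  by_contra h
  push_neg at h
  have hsub : badV G ε s t ⊆ s := filter_subset _ _
  have hb0 : (0:ℝ) < #(badV G ε s t) := lt_of_le_of_lt (by positivity) h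
  have h2 := hr _ hsub t Subset.rfl h.le (by nlinarith : ε * (#t : ℝ) ≤ (#t : ℝ))
  have hub : den G (badV G ε s t) t ≤ den G s t - ε := by
    have hc : (crossEdges G (badV G ε s t) t : ℝ) ≤
        (#(badV G ε s t) : ℝ) * ((den G s t - ε) * #t) := by
      rw [crossEdges_eq_sum]
      push_cast
      calc (∑ x ∈ badV G ε s t, (#{y ∈ t | G.Adj x y} : ℝ))
          ≤ ∑ _x ∈ badV G ε s t, (den G s t - ε) * #t :=
            sum_le_sum fun x hx => (mem_filter.1 hx).2.le
        _ = (#(badV G ε s t) : ℝ) * ((den G s t - ε) * #t) := by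
            rw [sum_const, nsmul_eq_mul]
    rw [den, div_le_iff₀ (by positivity)]
    nlinarith
  rw [abs_sub_lt_iff] at h2
  linarith

lemma good_triangles (hε : 0 < ε) (hδ : 2 * ε ≤ δ) (ht : (0:ℝ) < #t) (hu : (0:ℝ) < #u)
    (hdt : δ ≤ den G s t) (hdu : δ ≤ den G s u) (hdtu : δ ≤ den G t u)
    (hr : IsReg G ε t u) (x : α) (hx : x ∈ s \ (badV G ε s t ∪ badV G ε s u)) :
    (δ - ε) ^ 3 * #t * #u ≤
      (#(Rel.interedges G.Adj {y ∈ t | G.Adj x y} {z ∈ u | G.Adj x z}) : ℝ) := by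
  simp only [mem_sdiff, mem_union, not_or, badV, mem_filter, not_and, not_lt] at hx
  obtain ⟨hxs, h1, h2⟩ := hx
  have hT : (δ - ε) * #t ≤ #{y ∈ t | G.Adj x y} := le_trans (by nlinarith) (h1 hxs)
  have hU : (δ - ε) * #u ≤ #{z ∈ u | G.Adj x z} := le_trans (by nlinarith) (h2 hxs)
  have hεδ : ε ≤ δ - ε := by linarith
  have hreg := hr _ (filter_subset _ _) _ (filter_subset _ _)
    (le_trans (by nlinarith) hT) (le_trans (by nlinarith) hU)
  rw [abs_sub_lt_iff] at hreg
  have hden : δ - ε ≤ den G {y ∈ t | G.Adj x y} {z ∈ u | G.Adj x z} := by linarith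
  have hTpos : (0:ℝ) < #{y ∈ t | G.Adj x y} := lt_of_lt_of_le (by nlinarith) hT
  have hUpos : (0:ℝ) < #{z ∈ u | G.Adj x z} := lt_of_lt_of_le (by nlinarith) hU
  rw [den, le_div_iff₀ (by positivity)] at hden
  have : (crossEdges G {y ∈ t | G.Adj x y} {z ∈ u | G.Adj x z} : ℝ) =
      #(Rel.interedges G.Adj {y ∈ t | G.Adj x y} {z ∈ u | G.Adj x z}) := rfl
  rw [this] at hden
  calc (δ - ε) ^ 3 * #t * #u
      ≤ (δ - ε) * (#{y ∈ t | G.Adj x y} * #{z ∈ u | G.Adj x z}) := by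
        nlinarith [mul_le_mul hT hU (by nlinarith : (0:ℝ) ≤ (δ - ε) * #u) hTpos.le]
    _ ≤ _ := hden

end TCaux

/-- Triangle counting lemma: if `X, Y, Z` are pairwise `ε`-regular with densities at
least `δ ≥ 2ε > 0`, the number of triangles with one vertex in each set is at least
`(1 - 2ε)(δ - ε)³|X||Y||Z|`. -/
theorem stmt_14 {V : Type*} [DecidableEq V] (G : SimpleGraph V) [DecidableRel G.Adj]
    (X Y Z : Finset V) (hXY : Disjoint X Y) (hYZ : Disjoint Y Z) (hXZ : Disjoint X Z)
    (ε δ : ℝ) (hε : 0 < ε) (hδ : 2 * ε ≤ δ)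
    (hrXY : IsReg G ε X Y) (hrYZ : IsReg G ε Y Z) (hrXZ : IsReg G ε X Z)
    (hdXY : δ ≤ den G X Y) (hdYZ : δ ≤ den G Y Z) (hdXZ : δ ≤ den G X Z) :
    (1 - 2 * ε) * (δ - ε) ^ 3 * X.card * Y.card * Z.card ≤
      (((X ×ˢ Y ×ˢ Z).filter fun p =>
        G.Adj p.1 p.2.1 ∧ G.Adj p.2.1 p.2.2 ∧ G.Adj p.1 p.2.2).card : ℝ) := by
  have hδpos : 0 < δ := by linarith
  have hpos : ∀ A B : Finset V, δ ≤ den G A B → (0:ℝ) < #B := by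
    intro A B hAB
    rcases Nat.eq_zero_or_pos #B with h | h
    · exfalso; simp [den, h] at hAB; linarith
    · exact_mod_cast h
  have hYpos := hpos X Y hdXY
  have hZpos := hpos X Z hdXZ
  have hε1 : ε ≤ 1 := by have := den_le_one G X Y; linarith
  have hb1 := card_badV_le G hε hε1 hYpos (le_trans hδ hdXY) hrXY
  have hb2 := card_badV_le G hε hε1 hZpos (le_trans hδ hdXZ) hrXZ
  set good := X \ (badV G ε X Y ∪ badV G ε X Z) with hgooddef
  have hsub : badV G ε X Y ∪ badV G ε X Z ⊆ X :=
    union_subset (filter_subset _ _) (filter_subset _ _)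
  have hgood : (1 - 2 * ε) * #X ≤ (#good : ℝ) := by
    have h1 : (#good : ℝ) = #X - #(badV G ε X Y ∪ badV G ε X Z) := by
      rw [hgooddef, card_sdiff_of_subset hsub, Nat.cast_sub (card_le_card hsub)]
    have h2 : (#(badV G ε X Y ∪ badV G ε X Z) : ℝ) ≤ 2 * ε * #X := by
      have h3 := card_union_le (badV G ε X Y) (badV G ε X Z)
      have h4 := (Nat.cast_le (α := ℝ)).2 h3
      push_cast at h4
      linarith
    linarith
  set f : V → Finset (V × V × V) := fun x =>
    (Rel.interedges G.Adj {y ∈ Y | G.Adj x y} {z ∈ Z | G.Adj x z}).image fun p => (x, p)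
    with hfdef
  have hsubT : good.biUnion f ⊆ (X ×ˢ Y ×ˢ Z).filter fun p =>
      G.Adj p.1 p.2.1 ∧ G.Adj p.2.1 p.2.2 ∧ G.Adj p.1 p.2.2 := by
    rintro ⟨x, y, z⟩ h
    simp only [hfdef, mem_biUnion, mem_image, Rel.mem_interedges_iff, mem_filter,
      mem_product, Prod.exists, Prod.mk.injEq] at h ⊢
    obtain ⟨x', hx', y', z', ⟨⟨hy', hay⟩, ⟨hz', haz⟩, hyz⟩, rfl, rfl, rfl⟩ := h
    exact ⟨⟨(mem_sdiff.1 (hgooddef ▸ hx')).1, hy', hz'⟩, hay, hyz, haz⟩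
  have hcardB : #(good.biUnion f) = ∑ x ∈ good, #(f x) := by
    apply card_biUnion
    rintro x hx y hy hxy
    simp only [hfdef, disjoint_left, mem_image]
    rintro ⟨p, q⟩ ⟨b, hb, hb'⟩ ⟨c, hc, hc'⟩
    obtain ⟨rfl, rfl⟩ := Prod.mk.inj hb'
    exact hxy (Prod.mk.inj hc').1.symm
  calc (1 - 2 * ε) * (δ - ε) ^ 3 * #X * #Y * #Z
      = ((1 - 2 * ε) * #X) * ((δ - ε) ^ 3 * #Y * #Z) := by ring
    _ ≤ (#good : ℝ) * ((δ - ε) ^ 3 * #Y * #Z) := by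
        have h3 : (0:ℝ) ≤ (δ - ε) ^ 3 * #Y * #Z := by
          have h4 : (0:ℝ) ≤ δ - ε := by linarith
          positivity
        exact mul_le_mul_of_nonneg_right hgood h3
    _ ≤ ∑ x ∈ good, (#(f x) : ℝ) := by
        rw [← nsmul_eq_mul]
        refine card_nsmul_le_sum _ _ _ fun x hx => ?_
        have hx' : x ∈ X \ (badV G ε X Y ∪ badV G ε X Z) := hgooddef ▸ hx
        have h := good_triangles G hε hδ hYpos hZpos hdXY hdXZ hdYZ hrYZ x hx'
        rw [hfdef]
        simpa [card_image_of_injective _ (Prod.mk_right_injective x)] using h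
    _ = (#(good.biUnion f) : ℝ) := by rw [hcardB]; push_cast; rfl
    _ ≤ _ := by exact_mod_cast card_le_card hsubT
end

section
/- Let G be a triangle-free graph and S = ⟨(a_i, b_i, c_i) : i < n⟩ a sequence of triples of vertices such that for all j ≤ i: b_i is adjacent to a_j, c_i is adjacent to b_j, and a_{i+1} is adjacent to c_j. Define (x,y,z) <_ℓ (x',y',z') iff x is adjacent to y', y is adjacent to z', and z is adjacent to x'. Then there is no triple t = (x,y,z) of vertices of G and indices i < j such that t <_ℓ (a_i,b_i,c_i), (a_i,b_i,c_i) <_ℓ (a_j,b_j,c_j), and (a_j,b_j,c_j) <_ℓ t. -/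
/-- The relation `<_ℓ` on triples: `(x,y,z) <_ℓ (x',y',z')` iff `x R y'`, `y R z'`,
`z R x'`. -/
def ltL {V : Type*} (G : SimpleGraph V) (t t' : V × V × V) : Prop :=
  G.Adj t.1 t'.2.1 ∧ G.Adj t.2.1 t'.2.2 ∧ G.Adj t.2.2 t'.1

/-- In a triangle-free graph, given a sequence of triples as in Example `expl-rg`
(each row adjacent to all earlier rows coordinatewise in the helical pattern), there is
no triple `t` and indices `i < j` forming a `<_ℓ`-cycle `t <_ℓ s_i <_ℓ s_j <_ℓ t`. -/
theorem stmt_15 {V : Type*} (G : SimpleGraph V) (htf : G.CliqueFree 3)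
    (n : ℕ) (a b c : ℕ → V)
    (hba : ∀ i j, j ≤ i → i < n → G.Adj (b i) (a j))
    (hcb : ∀ i j, j ≤ i → i < n → G.Adj (c i) (b j))
    (hac : ∀ i j, j ≤ i → i + 1 < n → G.Adj (a (i + 1)) (c j)) :
    ¬ ∃ (t : V × V × V) (i j : ℕ), i < j ∧ j < n ∧
        ltL G t (a i, b i, c i) ∧
        ltL G (a i, b i, c i) (a j, b j, c j) ∧
        ltL G (a j, b j, c j) t := by
  rintro ⟨⟨x, y, z⟩, i, j, hij, hjn, ⟨h1, h2, h3⟩, ⟨h4, h5, h6⟩, ⟨h7, h8, h9⟩⟩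
  simp only at h1 h2 h3 h4 h5 h6 h7 h8 h9
  classical
  exact htf {x, b i, c j} (SimpleGraph.is3Clique_triple_iff.mpr ⟨h1, h9.symm, h5⟩)
end
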